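/- If subsets I, J of [m] are weakly separated, then they are non-crossing. -/

import Mathlib

open Finset

/-- Pairs `{u<v}` and `{x<y}` (values in `ℕ ∪ {∞}`) are non-nesting if
neither `x<u<v<y` nor `u<x<y<v`. -/
def PairNonNesting (u v x y : WithTop ℕ) : Prop :=
  ¬ (x < u ∧ u < v ∧ v < y) ∧ ¬ (u < x ∧ x < y ∧ y < v)

/-- Pairs `{u<v}` and `{x<y}` are non-crossing if neither `x<u<y<v` nor `u<x<v<y`. -/
def PairNonCrossing (u v x y : WithTop ℕ) : Prop :=
  ¬ (x < u ∧ u < y ∧ y < v) ∧ ¬ (u < x ∧ x < v ∧ v < y)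

/-- Remove one common entry (equal entries in equal positions) from the two lists. -/
def stripOnce (I J : List ℕ) : Option (List ℕ × List ℕ) :=
  ((List.range (min I.length J.length)).find? (fun s => I.getD s 0 == J.getD s 0)).map
    (fun s => (I.eraseIdx s, J.eraseIdx s))

def stripAux : ℕ → List ℕ → List ℕ → List ℕ × List ℕ
  | 0, I, J => (I, J)
  | n+1, I, J =>
    match stripOnce I J with
    | none => (I, J)
    | some (I', J') => stripAux n I' J'

/-- Repeatedly remove the "common part" (equal entries in equal positions). -/
def strip (I J : List ℕ) : List ℕ × List ℕ := stripAux I.length I J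

/-- The `s`-th entry (0-indexed) of the list, viewed in `ℕ ∪ {∞}`, with `∞` beyond the end. -/
def entry (l : List ℕ) (s : ℕ) : WithTop ℕ :=
  (l.map (fun a => (a : WithTop ℕ))).getD s ⊤

/-- Non-nesting condition on sorted lists `I`, `J` with `I` the shorter one:
after removing the common part, all consecutive-difference pairs are non-nesting
(with the `∞` convention for the shorter list). -/
def ListsNonNesting (I J : List ℕ) : Prop :=
  ∀ s : ℕ, s + 1 < (strip I J).2.length →
    PairNonNesting (entry (strip I J).1 s) (entry (strip I J).1 (s+1))
      (entry (strip I J).2 s) (entry (strip I J).2 (s+1))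

def ListsNonCrossing (I J : List ℕ) : Prop :=
  ∀ s : ℕ, s + 1 < (strip I J).2.length →
    PairNonCrossing (entry (strip I J).1 s) (entry (strip I J).1 (s+1))
      (entry (strip I J).2 s) (entry (strip I J).2 (s+1))

/-- The increasing list of elements of a finite set. -/
def sortedList (I : Finset ℕ) : List ℕ := I.sort (· ≤ ·)

/-- Subsets `I`, `J` are non-nesting. -/
def SetsNonNesting (I J : Finset ℕ) : Prop :=
  if I.card ≤ J.card then ListsNonNesting (sortedList I) (sortedList J)
  else ListsNonNesting (sortedList J) (sortedList I)

/-- Subsets `I`, `J` are non-crossing. -/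
def SetsNonCrossing (I J : Finset ℕ) : Prop :=
  if I.card ≤ J.card then ListsNonCrossing (sortedList I) (sortedList J)
  else ListsNonCrossing (sortedList J) (sortedList I)

/-- `A ≺ B`: every element of `A` is smaller than every element of `B`. -/
def Precedes (A B : Finset ℕ) : Prop := ∀ a ∈ A, ∀ b ∈ B, a < b

/-- Leclerc–Zelevinsky weak separation. -/
def WeaklySeparated (I J : Finset ℕ) : Prop :=
  (J.card ≤ I.card ∧ ∃ J₁ J₂ : Finset ℕ, Disjoint J₁ J₂ ∧ J \ I = J₁ ∪ J₂ ∧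
    Precedes J₁ (I \ J) ∧ Precedes (I \ J) J₂) ∨
  (I.card ≤ J.card ∧ ∃ I₁ I₂ : Finset ℕ, Disjoint I₁ I₂ ∧ I \ J = I₁ ∪ I₂ ∧
    Precedes I₁ (J \ I) ∧ Precedes (J \ I) I₂)

/-- Number of north steps of the path `p(I)` among its first `k` steps. -/
def northCount (I : Finset ℕ) (k : ℕ) : ℕ := (I.filter (fun i => i ≤ k)).card

/-- Paths `p(I)`, `p(J)` are non-crossing: one lies weakly northwest of the other
along their entire length. -/
def PathsNonCrossing (I J : Finset ℕ) : Prop :=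
  (∀ k, northCount J k ≤ northCount I k) ∨ (∀ k, northCount I k ≤ northCount J k)

/-- `[k₁, k₂]` (in step coordinates) is a proper common part of the paths `p(I)`, `p(J)`
of length `m`: a maximal shared connected subpath containing neither the source nor an
endpoint.  Maximality is expressed by the two paths separating just before `k₁` and just
after `k₂`. -/
def ProperCommonPart (m : ℕ) (I J : Finset ℕ) (k₁ k₂ : ℕ) : Prop :=
  1 ≤ k₁ ∧ k₁ ≤ k₂ ∧ k₂ < m ∧
  (∀ k, k₁ ≤ k → k ≤ k₂ → northCount I k = northCount J k) ∧
  northCount I (k₁ - 1) ≠ northCount J (k₁ - 1) ∧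
  northCount I (k₂ + 1) ≠ northCount J (k₂ + 1)

/-- Paths `p(I)`, `p(J)` are non-kissing: at every proper common part each path leaves
in the same direction in which it entered (the common part is a crossing, not a kiss). -/
def PathsNonKissing (m : ℕ) (I J : Finset ℕ) : Prop :=
  ∀ k₁ k₂, ProperCommonPart m I J k₁ k₂ → ((k₁ ∈ I) ↔ (k₂ + 1 ∈ I))

/-- Number of north steps among the first `k` steps, for `k ∈ ℤ` (zero for `k ≤ 0`). -/
def northCountZ (I : Finset ℕ) (k : ℤ) : ℤ := (northCount I k.toNat : ℤ)

/-- The indicator Gelfand–Tsetlin pattern of the path `p(I)`: the cell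
`[x,x+1] × [y,y+1]` gets a `1` if it lies southeast of the path and `0` if northwest. -/
noncomputable def Tpat (I : Finset ℕ) (x y : ℤ) : ℝ :=
  if y + 1 ≤ northCountZ I (x + y + 1) then 1 else 0

/-- `(x,y)` is a node of the partial staircase `L ⊆ L_m` with set of sink heights `A`:
it lies (weakly) southwest of some sink `(m-j, j)`, `j ∈ A`. -/
def NodeL (m : ℕ) (A : Finset ℕ) (x y : ℤ) : Prop :=
  0 ≤ x ∧ 0 ≤ y ∧ ∃ j ∈ A, x + j ≤ m ∧ y ≤ j

/-- Same, with natural-number coordinates. -/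
def InL (m : ℕ) (A : Finset ℕ) (x y : ℕ) : Prop :=
  ∃ j ∈ A, x + j ≤ m ∧ y ≤ j

/-- The path `p(I)` is contained in the partial staircase with sink heights `A`. -/
def PathInL (m : ℕ) (A : Finset ℕ) (I : Finset ℕ) : Prop :=
  ∀ k ≤ m, InL m A (k - northCount I k) (northCount I k)

/-- A critical node has edges of `L` leaving it toward both the north and the east. -/
def CriticalNode (m : ℕ) (A : Finset ℕ) (x y : ℕ) : Prop :=
  InL m A (x + 1) y ∧ InL m A x (y + 1)

open Classical in
/-- `N(L)`: the number of critical nodes of the partial staircase. -/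
noncomputable def numCritical (m : ℕ) (A : Finset ℕ) : ℕ :=
  ((Finset.range (m+1) ×ˢ Finset.range (m+1)).filter
    (fun p => CriticalNode m A p.1 p.2)).card

/- ### Auxiliary lemmas -/

lemma entry_norm (l : List ℕ) (s : ℕ) :
    entry l s = (l.map (Nat.cast : ℕ → WithTop ℕ)).getD s ⊤ := by
  unfold entry
  congr 1
  induction l with
  | nil => rfl
  | cons a l ih => simpa using ih

lemma entry_eq (l : List ℕ) {s : ℕ} (h : s < l.length) : entry l s = (l[s] : WithTop ℕ) := by
  rw [entry_norm, List.getD_eq_getElem _ _ (by rw [List.length_map]; exact h), List.getElem_map]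

lemma entry_eq_top (l : List ℕ) {s : ℕ} (h : l.length ≤ s) : entry l s = ⊤ := by
  rw [entry_norm]
  exact List.getD_eq_default _ _ (by rw [List.length_map]; exact h)

lemma sorted_lt_of_lt {L : List ℕ} (hL : L.Pairwise (·<·)) {i j : ℕ} (hij : i < j)
    (hj : j < L.length) : L[i] < L[j] :=
  List.pairwise_iff_getElem.mp hL i j (lt_trans hij hj) hj hij

lemma sorted_le_of_le {L : List ℕ} (hL : L.Pairwise (·<·)) {i j : ℕ} (hij : i ≤ j)
    (hj : j < L.length) : L[i] ≤ L[j] := by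
  rcases eq_or_lt_of_le hij with rfl | h
  · exact le_rfl
  · exact (sorted_lt_of_lt hL h hj).le

lemma entry_lt_succ {L : List ℕ} (hL : L.Pairwise (·<·)) {s : ℕ} (h : s < L.length) :
    entry L s < entry L (s+1) := by
  rw [entry_eq L h]
  by_cases h2 : s + 1 < L.length
  · rw [entry_eq L h2]
    exact_mod_cast sorted_lt_of_lt hL (Nat.lt_succ_self s) h2
  · rw [entry_eq_top L (by omega)]
    exact WithTop.coe_lt_top _

/-- If `b ∈ L`, `b ≤ t` and `t` is below the `(s+1)`-st entry, then `b ≤ L[s]`. -/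
lemma le_getElem_of_mem {L : List ℕ} (hL : L.Pairwise (·<·)) {s t : ℕ} (h1 : s < L.length)
    (h3 : (t : WithTop ℕ) < entry L (s+1)) {b : ℕ} (hb : b ∈ L) (hbt : b ≤ t) :
    b ≤ L[s] := by
  obtain ⟨i, hi, rfl⟩ := List.mem_iff_getElem.mp hb
  rcases le_or_gt i s with h | h
  · exact sorted_le_of_le hL h h1
  · exfalso
    have hs1 : s + 1 < L.length := by omega
    have h4 : L[s+1] ≤ L[i] := sorted_le_of_le hL (by omega) hi
    rw [entry_eq L hs1] at h3
    have : (L[s+1] : WithTop ℕ) ≤ (t : WithTop ℕ) := by exact_mod_cast le_trans h4 hbt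
    exact absurd h3 (not_lt.mpr this)

/-- Counting elements `≤ t` in a sorted list. -/
lemma cnt_eq {L : List ℕ} (hL : L.Pairwise (·<·)) {s t : ℕ} (h1 : s < L.length)
    (h2 : L[s] ≤ t) (h3 : (t : WithTop ℕ) < entry L (s+1)) :
    (L.toFinset.filter (· ≤ t)).card = s + 1 := by
  have hnd : L.Nodup := hL.nodup
  have hset : L.toFinset.filter (· ≤ t) = (L.take (s+1)).toFinset := by
    ext a
    simp only [Finset.mem_filter, List.mem_toFinset]
    constructor
    · rintro ⟨ha, hat⟩
      have hle : a ≤ L[s] := le_getElem_of_mem hL h1 h3 ha hat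
      obtain ⟨i, hi, rfl⟩ := List.mem_iff_getElem.mp ha
      have his : i < s + 1 := by
        by_contra hc
        push_neg at hc
        have := sorted_lt_of_lt hL (show s < i by omega) hi
        omega
      refine List.mem_iff_getElem.mpr ⟨i, ?_, ?_⟩
      · rw [List.length_take]; omega
      · rw [List.getElem_take]
    · intro ha
      obtain ⟨i, hi, rfl⟩ := List.mem_iff_getElem.mp ha
      have hi' : i < s + 1 := by rw [List.length_take] at hi; omega
      rw [List.getElem_take]
      have hilen : i < L.length := by rw [List.length_take] at hi; omega
      refine ⟨List.getElem_mem hilen, le_trans (sorted_le_of_le hL (by omega : i ≤ s) h1) h2⟩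
  rw [hset, List.toFinset_card_of_nodup ((List.take_sublist _ _).nodup hnd),
    List.length_take]
  omega

lemma cnt_sdiff_eq (X Y : Finset ℕ) (t : ℕ) :
    ((X \ Y).filter (· ≤ t)).card + ((X ∩ Y).filter (· ≤ t)).card = (X.filter (· ≤ t)).card := by
  rw [← Finset.card_union_of_disjoint
      (Finset.disjoint_filter_filter (Finset.disjoint_sdiff_inter X Y)),
    ← Finset.filter_union, Finset.sdiff_union_inter]

lemma pairNonCrossing_swap {u v x y : WithTop ℕ} (h : PairNonCrossing u v x y) :
    PairNonCrossing x y u v := ⟨h.2, h.1⟩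

/-- The core combinatorial lemma: sorted lists whose set differences admit
a weak-separation splitting give non-crossing consecutive pairs. -/
lemma core_pair {A B : List ℕ} (hA : A.Pairwise (·<·)) (hB : B.Pairwise (·<·))
    (hlen : A.length ≤ B.length) (A₁ A₂ : Finset ℕ)
    (hsplit : A.toFinset \ B.toFinset = A₁ ∪ A₂)
    (hp1 : Precedes A₁ (B.toFinset \ A.toFinset))
    (hp2 : Precedes (B.toFinset \ A.toFinset) A₂) (s : ℕ) :
    PairNonCrossing (entry A s) (entry A (s+1)) (entry B s) (entry B (s+1)) := by
  constructor
  · -- rule out  B[s] < A[s] < B[s+1] < entry A (s+1)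
    rintro ⟨hxu, huy, hyv⟩
    have hsA : s < A.length := by
      by_contra h
      rw [entry_eq_top A (by omega)] at huy
      exact absurd huy (by simp)
    have hsB1 : s + 1 < B.length := by
      by_contra h
      rw [entry_eq_top B (by omega)] at hyv
      exact absurd hyv (by simp)
    have hsB : s < B.length := by omega
    rw [entry_eq A hsA, entry_eq B hsB] at hxu
    rw [entry_eq A hsA, entry_eq B hsB1] at huy
    rw [entry_eq B hsB1] at hyv
    have hba : B[s] < A[s] := by exact_mod_cast hxu
    have hab1 : A[s] < B[s+1] := by exact_mod_cast huy
    have haA : A[s] ∈ A.toFinset := List.mem_toFinset.mpr (List.getElem_mem hsA)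
    have haB : A[s] ∉ B.toFinset := by
      intro hmem
      have h3 : ((A[s] : ℕ) : WithTop ℕ) < entry B (s+1) := by
        rw [entry_eq B hsB1]; exact_mod_cast hab1
      have := le_getElem_of_mem hB hsB h3 (List.mem_toFinset.mp hmem) le_rfl
      omega
    have cA : (A.toFinset.filter (· ≤ A[s])).card = s + 1 := by
      have h3 := entry_lt_succ hA hsA
      rw [entry_eq A hsA] at h3
      exact cnt_eq hA hsA le_rfl h3
    have cB : (B.toFinset.filter (· ≤ A[s])).card = s + 1 := by
      have h3 : ((A[s] : ℕ) : WithTop ℕ) < entry B (s+1) := by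
        rw [entry_eq B hsB1]; exact_mod_cast hab1
      exact cnt_eq hB hsB hba.le h3
    have hDq := cnt_sdiff_eq A.toFinset B.toFinset (A[s])
    have hDq' := cnt_sdiff_eq B.toFinset A.toFinset (A[s])
    rw [Finset.inter_comm] at hDq'
    have haDA : A[s] ∈ A₁ ∪ A₂ := hsplit ▸ Finset.mem_sdiff.mpr ⟨haA, haB⟩
    rcases Finset.mem_union.mp haDA with h1 | h2
    · have hzero : ((B.toFinset \ A.toFinset).filter (· ≤ A[s])).card = 0 := by
        rw [Finset.card_eq_zero, Finset.filter_eq_empty_iff]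
        intro d hd
        have := hp1 _ h1 d hd
        omega
      have hpos : 0 < ((A.toFinset \ B.toFinset).filter (· ≤ A[s])).card :=
        Finset.card_pos.mpr ⟨A[s], Finset.mem_filter.mpr ⟨Finset.mem_sdiff.mpr ⟨haA, haB⟩, le_rfl⟩⟩
      omega
    · have hb1B : B[s+1] ∈ B.toFinset := List.mem_toFinset.mpr (List.getElem_mem hsB1)
      have hb1A : B[s+1] ∉ A.toFinset := by
        intro hmem
        have := le_getElem_of_mem hA hsA hyv (List.mem_toFinset.mp hmem) le_rfl
        omega
      have := hp2 (B[s+1]) (Finset.mem_sdiff.mpr ⟨hb1B, hb1A⟩) _ h2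
      omega
  · -- rule out  A[s] < B[s] < A[s+1] < entry B (s+1)
    rintro ⟨hux, hxv, hvy⟩
    have hsA1 : s + 1 < A.length := by
      by_contra h
      rw [entry_eq_top A (by omega)] at hvy
      exact absurd hvy (by simp)
    have hsA : s < A.length := by omega
    have hsB : s < B.length := lt_of_lt_of_le hsA hlen
    rw [entry_eq A hsA, entry_eq B hsB] at hux
    rw [entry_eq B hsB, entry_eq A hsA1] at hxv
    rw [entry_eq A hsA1] at hvy
    have hab : A[s] < B[s] := by exact_mod_cast hux
    have hba1 : B[s] < A[s+1] := by exact_mod_cast hxv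
    have htB : B[s] ∈ B.toFinset := List.mem_toFinset.mpr (List.getElem_mem hsB)
    have htA : B[s] ∉ A.toFinset := by
      intro hmem
      have h3 : ((B[s] : ℕ) : WithTop ℕ) < entry A (s+1) := by
        rw [entry_eq A hsA1]; exact_mod_cast hba1
      have := le_getElem_of_mem hA hsA h3 (List.mem_toFinset.mp hmem) le_rfl
      omega
    have ht'A : A[s+1] ∈ A.toFinset := List.mem_toFinset.mpr (List.getElem_mem hsA1)
    have ht'B : A[s+1] ∉ B.toFinset := by
      intro hmem
      have := le_getElem_of_mem hB hsB hvy (List.mem_toFinset.mp hmem) le_rfl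
      omega
    have ht'DA : A[s+1] ∈ A₁ ∪ A₂ := hsplit ▸ Finset.mem_sdiff.mpr ⟨ht'A, ht'B⟩
    rcases Finset.mem_union.mp ht'DA with h1 | h2
    · have := hp1 _ h1 (B[s]) (Finset.mem_sdiff.mpr ⟨htB, htA⟩)
      omega
    · have cA : (A.toFinset.filter (· ≤ A[s+1])).card = s + 2 := by
        have h3 := entry_lt_succ hA hsA1
        rw [entry_eq A hsA1] at h3
        exact cnt_eq hA hsA1 le_rfl h3
      have cB : (B.toFinset.filter (· ≤ A[s+1])).card = s + 1 :=
        cnt_eq hB hsB hba1.le hvy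
      have hDq := cnt_sdiff_eq A.toFinset B.toFinset (A[s+1])
      have hDq' := cnt_sdiff_eq B.toFinset A.toFinset (A[s+1])
      rw [Finset.inter_comm] at hDq'
      have hfull : ((B.toFinset \ A.toFinset).filter (· ≤ A[s+1])).card
          = (B.toFinset \ A.toFinset).card := by
        rw [Finset.filter_true_of_mem]
        intro d hd
        exact (hp2 d hd _ h2).le
      have hcard : (A.toFinset \ B.toFinset).card ≤ (B.toFinset \ A.toFinset).card := by
        have c1 := Finset.card_sdiff_add_card_inter A.toFinset B.toFinset
        have c2 := Finset.card_sdiff_add_card_inter B.toFinset A.toFinset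
        rw [Finset.inter_comm] at c2
        have l1 : A.toFinset.card = A.length := List.toFinset_card_of_nodup hA.nodup
        have l2 : B.toFinset.card = B.length := List.toFinset_card_of_nodup hB.nodup
        omega
      have hle := Finset.card_filter_le (A.toFinset \ B.toFinset) (· ≤ A[s+1])
      omega

lemma toFinset_eraseIdx {L : List ℕ} (hnd : L.Nodup) {s : ℕ} (hs : s < L.length) :
    (L.eraseIdx s).toFinset = L.toFinset.erase L[s] := by
  have hnot : L[s] ∉ L.take s ∧ L[s] ∉ L.drop (s+1) := by
    have hd : L.take s ++ L[s] :: L.drop (s+1) = L := by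
      rw [← List.drop_eq_getElem_cons hs, List.take_append_drop]
    have h2 := hnd
    rw [← hd, List.nodup_append] at h2
    obtain ⟨_, h2, h3⟩ := h2
    exact ⟨fun hm => h3 _ hm _ List.mem_cons_self rfl, (List.nodup_cons.mp h2).1⟩
  ext a
  rw [List.eraseIdx_eq_take_drop_succ]
  simp only [List.toFinset_append, Finset.mem_union, List.mem_toFinset, Finset.mem_erase]
  constructor
  · rintro (h | h)
    · exact ⟨fun he => hnot.1 (he ▸ h), List.take_subset _ _ h⟩
    · exact ⟨fun he => hnot.2 (he ▸ h), List.drop_subset _ _ h⟩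
  · rintro ⟨hne, ha⟩
    obtain ⟨i, hi, rfl⟩ := List.mem_iff_getElem.mp ha
    rcases lt_trichotomy i s with h | h | h
    · left
      refine List.mem_iff_getElem.mpr ⟨i, ?_, ?_⟩
      · rw [List.length_take]; omega
      · rw [List.getElem_take]
    · exact absurd (by subst h; rfl) hne
    · right
      refine List.mem_iff_getElem.mpr ⟨i - (s+1), ?_, ?_⟩
      · rw [List.length_drop]; omega
      · rw [List.getElem_drop]
        congr 1
        omega

lemma sdiff_erase_erase {s t : Finset ℕ} {c : ℕ} (hc : c ∈ t) :
    (s.erase c) \ (t.erase c) = s \ t := by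
  ext a
  simp only [Finset.mem_sdiff, Finset.mem_erase]
  constructor
  · rintro ⟨⟨hne, ha⟩, hnot⟩
    exact ⟨ha, fun hat => hnot ⟨hne, hat⟩⟩
  · rintro ⟨ha, hnat⟩
    have hne : a ≠ c := fun he => hnat (he ▸ hc)
    exact ⟨⟨hne, ha⟩, fun h => hnat h.2⟩

lemma stripOnce_some {A B A' B' : List ℕ} (h : stripOnce A B = some (A', B')) :
    ∃ (s : ℕ) (hsa : s < A.length) (hsb : s < B.length),
      A[s] = B[s] ∧ A' = A.eraseIdx s ∧ B' = B.eraseIdx s := by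
  unfold stripOnce at h
  rw [Option.map_eq_some_iff] at h
  obtain ⟨s, hfind, heq⟩ := h
  have hmem := List.mem_of_find?_eq_some hfind
  rw [List.mem_range] at hmem
  have hsa : s < A.length := lt_of_lt_of_le hmem (min_le_left _ _)
  have hsb : s < B.length := lt_of_lt_of_le hmem (min_le_right _ _)
  have hpred := List.find?_some hfind
  rw [beq_iff_eq, List.getD_eq_getElem _ _ hsa, List.getD_eq_getElem _ _ hsb] at hpred
  simp only [Prod.mk.injEq] at heq
  exact ⟨s, hsa, hsb, hpred, heq.1.symm, heq.2.symm⟩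

lemma stripAux_inv (DA DB : Finset ℕ) (d : ℕ) :
    ∀ (n : ℕ) (A B : List ℕ), A.Pairwise (·<·) → B.Pairwise (·<·) →
      A.toFinset \ B.toFinset = DA → B.toFinset \ A.toFinset = DB →
      B.length = A.length + d →
      (stripAux n A B).1.Pairwise (·<·) ∧ (stripAux n A B).2.Pairwise (·<·) ∧
      (stripAux n A B).1.toFinset \ (stripAux n A B).2.toFinset = DA ∧
      (stripAux n A B).2.toFinset \ (stripAux n A B).1.toFinset = DB ∧
      (stripAux n A B).2.length = (stripAux n A B).1.length + d := by
  intro n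
  induction n with
  | zero =>
    intro A B h1 h2 h3 h4 h5
    exact ⟨h1, h2, h3, h4, h5⟩
  | succ n ih =>
    intro A B h1 h2 h3 h4 h5
    rcases hso : stripOnce A B with _ | ⟨A', B'⟩
    · simp only [stripAux, hso]
      exact ⟨h1, h2, h3, h4, h5⟩
    · simp only [stripAux, hso]
      obtain ⟨s, hsa, hsb, hceq, hA', hB'⟩ := stripOnce_some hso
      subst hA'; subst hB'
      have hcB : A[s] ∈ B.toFinset := by
        rw [hceq]; exact List.mem_toFinset.mpr (List.getElem_mem hsb)
      have hcA : B[s] ∈ A.toFinset := by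
        rw [← hceq]; exact List.mem_toFinset.mpr (List.getElem_mem hsa)
      have e1 : (A.eraseIdx s).toFinset = A.toFinset.erase (A[s]) :=
        toFinset_eraseIdx h1.nodup hsa
      have e2 : (B.eraseIdx s).toFinset = B.toFinset.erase (B[s]) :=
        toFinset_eraseIdx h2.nodup hsb
      apply ih
      · exact h1.sublist (List.eraseIdx_sublist _ _)
      · exact h2.sublist (List.eraseIdx_sublist _ _)
      · rw [e1, e2, ← hceq, sdiff_erase_erase hcB, h3]
      · rw [e1, e2, ← hceq, hceq, sdiff_erase_erase (hceq ▸ hcA), h4]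
      · have l1 : (A.eraseIdx s).length = A.length - 1 := by
          rw [List.length_eraseIdx, if_pos hsa]
        have l2 : (B.eraseIdx s).length = B.length - 1 := by
          rw [List.length_eraseIdx, if_pos hsb]
        omega

lemma strip_inv (A B : List ℕ) (d : ℕ) (h1 : A.Pairwise (·<·)) (h2 : B.Pairwise (·<·))
    (h5 : B.length = A.length + d) :
    (strip A B).1.Pairwise (·<·) ∧ (strip A B).2.Pairwise (·<·) ∧
    (strip A B).1.toFinset \ (strip A B).2.toFinset = A.toFinset \ B.toFinset ∧
    (strip A B).2.toFinset \ (strip A B).1.toFinset = B.toFinset \ A.toFinset ∧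
    (strip A B).2.length = (strip A B).1.length + d :=
  stripAux_inv _ _ d A.length A B h1 h2 rfl rfl h5

lemma sortedList_sorted (I : Finset ℕ) : (sortedList I).Pairwise (·<·) :=
  (Finset.sortedLT_sort I).pairwise

lemma sortedList_toFinset (I : Finset ℕ) : (sortedList I).toFinset = I :=
  Finset.sort_toFinset ..

lemma sortedList_length (I : Finset ℕ) : (sortedList I).length = I.card :=
  Finset.length_sort _

/-- If subsets `I`, `J` of `[m]` are weakly separated, then they are non-crossing. -/
theorem weaklySeparated_implies_nonCrossing (m : ℕ) (I J : Finset ℕ)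
    (hI : I ⊆ Finset.Icc 1 m) (hJ : J ⊆ Finset.Icc 1 m)
    (hws : WeaklySeparated I J) : SetsNonCrossing I J := by
  rcases hws with ⟨hcard, J₁, J₂, hdisj, hsp, hq1, hq2⟩ | ⟨hcard, I₁, I₂, hdisj, hsp, hq1, hq2⟩
  · unfold SetsNonCrossing
    split_ifs with h
    · -- cards are equal here; apply the core lemma with the roles swapped
      obtain ⟨s1, s2, d1, d2, dl⟩ := strip_inv (sortedList I) (sortedList J) 0
        (sortedList_sorted I) (sortedList_sorted J)
        (by rw [sortedList_length, sortedList_length]; omega)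
      intro s _
      refine pairNonCrossing_swap (core_pair s2 s1 (by omega) J₁ J₂ ?_ ?_ ?_ s)
      · rw [d2, sortedList_toFinset, sortedList_toFinset]; exact hsp
      · rw [d1, sortedList_toFinset, sortedList_toFinset]; exact hq1
      · rw [d1, sortedList_toFinset, sortedList_toFinset]; exact hq2
    · obtain ⟨s1, s2, d1, d2, dl⟩ := strip_inv (sortedList J) (sortedList I) (I.card - J.card)
        (sortedList_sorted J) (sortedList_sorted I)
        (by rw [sortedList_length, sortedList_length]; omega)
      intro s _
      refine core_pair s1 s2 (by omega) J₁ J₂ ?_ ?_ ?_ s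
      · rw [d1, sortedList_toFinset, sortedList_toFinset]; exact hsp
      · rw [d2, sortedList_toFinset, sortedList_toFinset]; exact hq1
      · rw [d2, sortedList_toFinset, sortedList_toFinset]; exact hq2
  · unfold SetsNonCrossing
    rw [if_pos hcard]
    obtain ⟨s1, s2, d1, d2, dl⟩ := strip_inv (sortedList I) (sortedList J) (J.card - I.card)
      (sortedList_sorted I) (sortedList_sorted J)
      (by rw [sortedList_length, sortedList_length]; omega)
    intro s _
    refine core_pair s1 s2 (by omega) I₁ I₂ ?_ ?_ ?_ s
    · rw [d1, sortedList_toFinset, sortedList_toFinset]; exact hsp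
    · rw [d2, sortedList_toFinset, sortedList_toFinset]; exact hq1
    · rw [d2, sortedList_toFinset, sortedList_toFinset]; exact hq2
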